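/- Let U, V : [0,∞) → ℝ be differentiable, satisfying U' = -U² + V and V' = -V² - U, with U(0) - V(0) = 1 and U(0) + V(0) < -1 (equivalently V(0) < -1 given the first condition). Then U and V cannot both remain finite for all time: there is no globally defined differentiable solution. -/

import Mathlib

open Set

/-- There is no globally defined differentiable solution `U, V : [0,∞) → ℝ` of the
system `U' = -U² + V`, `V' = -V² - U` with `U 0 - V 0 = 1` and `V 0 < -1`. -/
theorem stmt4 (U V : ℝ → ℝ)
    (hU : ∀ t ∈ Set.Ici (0:ℝ), HasDerivAt U (-(U t)^2 + V t) t)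
    (hV : ∀ t ∈ Set.Ici (0:ℝ), HasDerivAt V (-(V t)^2 - U t) t)
    (h1 : U 0 - V 0 = 1) (h2 : V 0 < -1) :
    False := by
  -- Step 1: U t - V t = 1 for all t ≥ 0, via Gronwall.
  set Z : ℝ → ℝ := fun t => U t - V t - 1 with hZdef
  have hZd : ∀ t ∈ Ici (0:ℝ), HasDerivAt Z (-(U t + V t) * Z t) t := by
    intro t ht
    have := ((hU t ht).sub (hV t ht)).sub_const 1
    refine this.congr_deriv ?_
    show _ = -(U t + V t) * (U t - V t - 1)
    ring
  have hUVcont : ContinuousOn (fun t => U t + V t) (Ici (0:ℝ)) := fun t ht =>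
    (((hU t ht).continuousAt).add ((hV t ht).continuousAt)).continuousWithinAt
  have hZcont : ContinuousOn Z (Ici (0:ℝ)) := fun t ht =>
    ((hZd t ht).continuousAt).continuousWithinAt
  have hZ1 : ∀ t ∈ Ici (0:ℝ), Z t = 0 := by
    intro T hT
    obtain ⟨K, hK⟩ := (isCompact_Icc (a := (0:ℝ)) (b := T)).exists_bound_of_continuousOn
      (hUVcont.mono Icc_subset_Ici_self)
    have key := norm_le_gronwallBound_of_norm_deriv_right_le
      (f := Z) (f' := fun t => -(U t + V t) * Z t) (δ := 0) (K := K) (ε := 0) (a := 0) (b := T)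
      (hZcont.mono Icc_subset_Ici_self)
      (fun x hx => (hZd x hx.1).hasDerivWithinAt)
      (by simp [hZdef, h1]) ?_ T ⟨hT, le_rfl⟩
    · have hb : gronwallBound (0:ℝ) K 0 (T - 0) = 0 := by
        rw [gronwallBound_ε0]; ring
      rw [hb] at key
      exact norm_le_zero_iff.mp key
    · intro x hx
      have := hK x ⟨hx.1, le_of_lt hx.2⟩
      have hn : (0:ℝ) ≤ ‖Z x‖ := norm_nonneg _
      calc ‖-(U x + V x) * Z x‖ = ‖U x + V x‖ * ‖Z x‖ := by rw [norm_mul, norm_neg]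
        _ ≤ K * ‖Z x‖ + 0 := by nlinarith
  have hUV : ∀ t ∈ Ici (0:ℝ), U t = V t + 1 := by
    intro t ht
    have := hZ1 t ht
    simp only [hZdef] at this
    linarith
  -- Step 2: V' = -(V² + V + 1) on [0, ∞).
  have hVd : ∀ t ∈ Ici (0:ℝ), HasDerivAt V (-((V t)^2 + V t + 1)) t := by
    intro t ht
    have := hV t ht
    rw [hUV t ht] at this
    convert this using 1; ring
  have hVcont : ContinuousOn V (Ici (0:ℝ)) := fun t ht =>
    ((hVd t ht).continuousAt).continuousWithinAt
  -- Step 3: V is antitone on [0, ∞), hence V t ≤ V 0 < -1.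
  have hanti : AntitoneOn V (Ici (0:ℝ)) := by
    apply antitoneOn_of_deriv_nonpos (convex_Ici 0) hVcont
    · intro x hx
      rw [interior_Ici] at hx
      exact (hVd x (mem_Ici.mpr (le_of_lt hx))).differentiableAt.differentiableWithinAt
    · intro x hx
      rw [interior_Ici] at hx
      rw [(hVd x (mem_Ici.mpr (le_of_lt hx))).deriv]
      nlinarith [sq_nonneg (V x + 1), sq_nonneg (V x - 1)]
  have hVneg : ∀ t ∈ Ici (0:ℝ), V t < -1 := fun t ht =>
    lt_of_le_of_lt (hanti (mem_Ici.mpr le_rfl) ht (mem_Ici.mp ht)) h2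
  -- Step 4: g = V⁻¹ satisfies g' ≥ 3/4, forcing g to become positive, contradiction.
  set g : ℝ → ℝ := fun t => (V t)⁻¹ with hgdef
  have hVne : ∀ t ∈ Ici (0:ℝ), V t ≠ 0 := fun t ht => by
    have := hVneg t ht; linarith
  have hgd : ∀ t ∈ Ici (0:ℝ),
      HasDerivAt g (((V t)^2 + V t + 1) / (V t)^2) t := by
    intro t ht
    have := (hVd t ht).inv (hVne t ht)
    refine this.congr_deriv ?_
    ring
  set h : ℝ → ℝ := fun t => g t - 3/4 * t with hhdef
  have hhd : ∀ t ∈ Ici (0:ℝ),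
      HasDerivAt h (((V t)^2 + V t + 1) / (V t)^2 - 3/4) t := by
    intro t ht
    have := (hgd t ht).sub (((hasDerivAt_id t).const_mul (3/4 : ℝ)))
    refine this.congr_deriv ?_
    simp
  have hmono : MonotoneOn h (Ici (0:ℝ)) := by
    apply monotoneOn_of_deriv_nonneg (convex_Ici 0)
      (fun t ht => ((hhd t ht).continuousAt).continuousWithinAt)
    · intro x hx
      rw [interior_Ici] at hx
      exact (hhd x (mem_Ici.mpr (le_of_lt hx))).differentiableAt.differentiableWithinAt
    · intro x hx
      rw [interior_Ici] at hx
      rw [(hhd x (mem_Ici.mpr (le_of_lt hx))).deriv]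
      have hne := hVne x (mem_Ici.mpr (le_of_lt hx))
      have hsq : (0:ℝ) < (V x)^2 := by positivity
      rw [sub_nonneg, le_div_iff₀ hsq]
      nlinarith [sq_nonneg (V x + 2)]
  have h02 : h 0 ≤ h 2 := hmono (mem_Ici.mpr le_rfl) (by norm_num) (by norm_num)
  have hg0 : -1 < g 0 := by
    have h0ne : V 0 ≠ 0 := hVne 0 (mem_Ici.mpr le_rfl)
    have hinv : (V 0)⁻¹ * V 0 = 1 := inv_mul_cancel₀ h0ne
    simp only [hgdef]
    nlinarith [hinv]
  have hg2 : g 2 < 0 := by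
    simp only [hgdef]
    exact inv_lt_zero.mpr (by linarith [hVneg 2 (by norm_num)])
  simp only [hhdef] at h02
  linarith
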